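/- Let ĥ be the output of the algorithm that returns any h ∈ Ĥ_Q ∩ Ĥ_P if this intersection is nonempty, and otherwise returns the Q-sample ERM ĥ_Q. If Ĥ_Q is an (ε_Q, τ)-weak confidence set under Q and Ĥ_P is an (ε_P, τ)-weak confidence set under P, then with probability at least 1 - 2τ: E_Q(ĥ) ≤ min{ε_Q, δ(ε_P)}, where δ is the weak modulus of transfer. -/
import Mathlib


noncomputable def excess {H : Type*} (R : H → ℝ) (h : H) : ℝ :=
  R h - sInf (Set.range R)

/-- Excess risk w.r.t. a subclass `H₀ ⊆ H`. -/
noncomputable def excessOn {H : Type*} (R : H → ℝ) (S : Set H) (h : H) : ℝ :=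
  R h - sInf (R '' S)

def cset {H : Type*} (R : H → ℝ) (ε : ℝ) : Set H :=
  {h | excess R h ≤ ε}

/-- Weak modulus of transfer `δ(ε) = sup {E_Q(h) : E_P(h) ≤ ε}` (valued in `(-∞,∞]`). -/
noncomputable def wmod {H : Type*} (RP RQ : H → ℝ) (ε : ℝ) : EReal :=
  sSup ((fun h => (excess RQ h : EReal)) '' cset RP ε)

/-- Strong modulus of transfer
`δ(ε₁,ε₂) = sup {E_Q(h) : h ∈ H_Q(ε₁), E_P(h;H_Q(ε₁)) ≤ ε₂}`. -/
noncomputable def smod {H : Type*} (RP RQ : H → ℝ) (ε₁ ε₂ : ℝ) : EReal :=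
  sSup ((fun h => (excess RQ h : EReal)) ''
    {h | h ∈ cset RQ ε₁ ∧ excessOn RP (cset RQ ε₁) h ≤ ε₂})

noncomputable def pivot {H : Type*} (RP RQ : H → ℝ) : EReal :=
  ⨆ (ε : ℝ) (_ : 0 < ε), sInf ((fun h => (excess RQ h : EReal)) '' cset RP ε)

/-- deterministic core of Theorem `single-delta`: on the intersection of
the two weak-confidence-set events, the output `ĥ` of Algorithm 1 satisfies
`E_Q(ĥ) ≤ min {ε_Q, δ(ε_P)}`. -/
theorem weak_adaptive_transfer {H : Type*} [Nonempty H] (RP RQ : H → ℝ)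
    (hRP : ∀ h, 0 ≤ RP h) (hRQ : ∀ h, 0 ≤ RQ h)
    (εQ εP : ℝ) (hεQ : 0 < εQ) (hεP : 0 < εP)
    (HQhat HPhat : Set H) (hQerm hPerm : H)
    -- weak confidence set event under Q:
    (hQi : ∃ εhatQ : ℝ, excess RQ hQerm < εhatQ ∧ cset RQ εhatQ ⊆ HQhat)
    (hQii : HQhat ⊆ cset RQ εQ)
    -- weak confidence set event under P:
    (hPi : ∃ εhatP : ℝ, excess RP hPerm < εhatP ∧ cset RP εhatP ⊆ HPhat)
    (hPii : HPhat ⊆ cset RP εP)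
    -- the algorithm's output:
    (hhat : H)
    (halg : ((HQhat ∩ HPhat).Nonempty → hhat ∈ HQhat ∩ HPhat)
      ∧ (¬ (HQhat ∩ HPhat).Nonempty → hhat = hQerm)) :
    (excess RQ hhat : EReal) ≤ min (εQ : EReal) (wmod RP RQ εP) := by
  obtain ⟨εhatQ, hQlt, hQsub⟩ := hQi
  obtain ⟨εhatP, hPlt, hPsub⟩ := hPi
  by_cases hne : (HQhat ∩ HPhat).Nonempty
  · obtain ⟨hQ, hP⟩ := halg.1 hne
    refine le_min ?_ ?_
    · exact_mod_cast (hQii hQ)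
    · exact le_sSup ⟨hhat, hPii hP, rfl⟩
  · have heq : hhat = hQerm := halg.2 hne
    have hQmem : hQerm ∈ HQhat := hQsub (le_of_lt hQlt)
    have hPmem : hPerm ∈ HPhat := hPsub (le_of_lt hPlt)
    have hPnotQ : hPerm ∉ HQhat := fun hh => hne ⟨hPerm, hh, hPmem⟩
    have hgt : εhatQ < excess RQ hPerm := by
      by_contra hle
      exact hPnotQ (hQsub (le_of_not_gt hle))
    refine le_min ?_ ?_
    · rw [heq]; exact_mod_cast (hQii hQmem)
    · have h1 : (excess RQ hPerm : EReal) ≤ wmod RP RQ εP :=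
        le_sSup ⟨hPerm, hPii hPmem, rfl⟩
      refine le_trans ?_ h1
      rw [heq]
      exact_mod_cast le_of_lt (lt_trans hQlt hgt)
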